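/- Let G=(V,w) be an edge-weighted graph with |V| = n, let k ≥ 1 and c ∈ (0,1] be real numbers, let B ≥ 0, and let S_1,…,S_N be a finite list of subsets of V whose union is V such that δ(S_t) ≤ B for every t and every vertex of V belongs to at least (c/(n·k))·N of the sets S_t. Let σ be a uniformly random permutation of {1,…,N} and define P_i = S_{σ(i)} ∖ (S_{σ(1)} ∪ ⋯ ∪ S_{σ(i−1)}) for 1 ≤ i ≤ N. Then E[Σ_{i=1}^{N} δ(P_i)] ≤ 2·k·n·B/c. -/

import Mathlib

open Finset

attribute [local instance] Classical.propDecidable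

/-- `δ(S)`: total weight of edges with exactly one endpoint in `S`. -/
noncomputable def cutw {V : Type*} [Fintype V] (w : V → V → ℝ) (S : Finset V) : ℝ :=
  ∑ u, ∑ v, if u ∈ S ∧ v ∉ S then w u v else 0

lemma min'_congr' {α : Type*} [LinearOrder α] {s t : Finset α} (h : s = t)
    {hs : s.Nonempty} {ht : t.Nonempty} : s.min' hs = t.min' ht := by subst h; rfl

lemma swap_mem_iff' {α : Type*} [DecidableEq α] {t t' x : α} {R : Finset α}
    (ht : t ∈ R) (ht' : t' ∈ R) : Equiv.swap t t' x ∈ R ↔ x ∈ R := by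
  rcases eq_or_ne x t with rfl | hx
  · simp [Equiv.swap_apply_left, ht, ht']
  rcases eq_or_ne x t' with rfl | hx'
  · simp [Equiv.swap_apply_right, ht, ht']
  · rw [Equiv.swap_apply_of_ne_of_ne hx hx']

noncomputable def firstIn {N : ℕ} (R : Finset (Fin N)) (hR : R.Nonempty)
    (σ : Equiv.Perm (Fin N)) : Fin N :=
  σ ((Finset.univ.filter fun i => σ i ∈ R).min'
    (by obtain ⟨t, ht⟩ := hR; exact ⟨σ⁻¹ t, by simp [ht]⟩))

lemma firstIn_mem {N : ℕ} (R : Finset (Fin N)) (hR : R.Nonempty) (σ : Equiv.Perm (Fin N)) :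
    firstIn R hR σ ∈ R := by
  have := Finset.min'_mem (Finset.univ.filter fun i => σ i ∈ R)
    (by obtain ⟨t, ht⟩ := hR; exact ⟨σ⁻¹ t, by simp [ht]⟩)
  simpa [firstIn] using (Finset.mem_filter.mp this).2

lemma firstIn_swap_mul {N : ℕ} {R : Finset (Fin N)} (hR : R.Nonempty) {t t' : Fin N}
    (ht : t ∈ R) (ht' : t' ∈ R) (σ : Equiv.Perm (Fin N)) :
    firstIn R hR (Equiv.swap t t' * σ) = Equiv.swap t t' (firstIn R hR σ) := by
  have hfilt : (Finset.univ.filter fun i => (Equiv.swap t t' * σ) i ∈ R)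
      = (Finset.univ.filter fun i => σ i ∈ R) := by
    apply Finset.filter_congr; intro i _
    simp only [Equiv.Perm.mul_apply, eq_iff_iff]
    exact swap_mem_iff' ht ht'
  unfold firstIn
  rw [min'_congr' hfilt]
  rfl

lemma count_firstIn_mem {N : ℕ} (R D : Finset (Fin N)) (hR : R.Nonempty) (hD : D ⊆ R) :
    (Finset.univ.filter fun σ : Equiv.Perm (Fin N) => firstIn R hR σ ∈ D).card * R.card
      = D.card * N.factorial := by
  classical
  obtain ⟨t0, ht0⟩ := hR.exists_mem
  set f : Fin N → ℕ :=
    fun t => (Finset.univ.filter fun σ : Equiv.Perm (Fin N) => firstIn R hR σ = t).card with hf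
  have hfib : ∀ t ∈ R, f t = f t0 := by
    intro t ht
    apply Finset.card_nbij' (fun σ => Equiv.swap t t0 * σ) (fun σ => Equiv.swap t t0 * σ)
    · intro σ hσ
      simp only [Finset.mem_coe, Finset.mem_filter, Finset.mem_univ, true_and] at hσ ⊢
      rw [firstIn_swap_mul hR ht ht0, hσ, Equiv.swap_apply_left]
    · intro σ hσ
      simp only [Finset.mem_coe, Finset.mem_filter, Finset.mem_univ, true_and] at hσ ⊢
      rw [firstIn_swap_mul hR ht ht0, hσ, Equiv.swap_apply_right]
    · intro σ _; simp [← mul_assoc]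
    · intro σ _; simp [← mul_assoc]
  have h1 : ∑ t ∈ R, f t = N.factorial := by
    have := Finset.card_eq_sum_card_fiberwise
      (s := (Finset.univ : Finset (Equiv.Perm (Fin N)))) (t := R)
      (f := fun σ => firstIn R hR σ) (fun σ _ => firstIn_mem R hR σ)
    rw [Finset.card_univ, Fintype.card_perm, Fintype.card_fin] at this
    rw [← this]
  have h2 : (Finset.univ.filter fun σ : Equiv.Perm (Fin N) => firstIn R hR σ ∈ D).card
      = ∑ t ∈ D, f t := by
    have := Finset.card_eq_sum_card_fiberwise
      (s := (Finset.univ.filter fun σ : Equiv.Perm (Fin N) => firstIn R hR σ ∈ D)) (t := D)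
      (f := fun σ => firstIn R hR σ)
      (fun σ hσ => (Finset.mem_filter.mp hσ).2)
    rw [this]
    apply Finset.sum_congr rfl
    intro t htD
    congr 1
    ext σ
    simp only [Finset.mem_filter, Finset.mem_univ, true_and]
    constructor
    · rintro ⟨-, h⟩; exact h
    · intro h; exact ⟨h ▸ htD, h⟩
  have h3 : ∑ t ∈ D, f t = D.card * f t0 := by
    rw [Finset.sum_congr rfl (fun t htD => hfib t (hD htD)), Finset.sum_const, smul_eq_mul]
  have h4 : ∑ t ∈ R, f t = R.card * f t0 := by
    rw [Finset.sum_congr rfl hfib, Finset.sum_const, smul_eq_mul]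
  rw [h2, h3, ← h1, h4]
  ring

section PairCount

variable {V : Type} [Fintype V] [DecidableEq V] {N : ℕ} (S : Fin N → Finset V)

/-- index of the first set in the order `σ` containing `u` -/
noncomputable def idx (u : V) (hu : ∃ t, u ∈ S t) (σ : Equiv.Perm (Fin N)) : Fin N :=
  (Finset.univ.filter fun j => u ∈ S (σ j)).min'
    (by obtain ⟨t, ht⟩ := hu; exact ⟨σ⁻¹ t, by simp [ht]⟩)

lemma idx_mem (u : V) (hu : ∃ t, u ∈ S t) (σ : Equiv.Perm (Fin N)) :
    u ∈ S (σ (idx S u hu σ)) := by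
  have := Finset.min'_mem (Finset.univ.filter fun j => u ∈ S (σ j))
    (by obtain ⟨t, ht⟩ := hu; exact ⟨σ⁻¹ t, by simp [ht]⟩)
  exact (Finset.mem_filter.mp this).2

lemma idx_le (u : V) (hu : ∃ t, u ∈ S t) (σ : Equiv.Perm (Fin N)) {j : Fin N}
    (hj : u ∈ S (σ j)) : idx S u hu σ ≤ j :=
  Finset.min'_le _ _ (Finset.mem_filter.mpr ⟨Finset.mem_univ j, hj⟩)

lemma mem_part_iff_idx (u : V) (hu : ∃ t, u ∈ S t) (σ : Equiv.Perm (Fin N)) (i : Fin N) :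
    u ∈ (S (σ i)) \ ((Finset.univ.filter fun j : Fin N => j < i).biUnion fun j => S (σ j))
      ↔ i = idx S u hu σ := by
  simp only [Finset.mem_sdiff, Finset.mem_biUnion, Finset.mem_filter, Finset.mem_univ,
    true_and, not_exists, not_and]
  constructor
  · rintro ⟨h1, h2⟩
    have hle := idx_le S u hu σ h1
    rcases hle.lt_or_eq with hlt | heq
    · exact absurd (idx_mem S u hu σ) (h2 _ hlt)
    · exact heq.symm
  · rintro rfl
    exact ⟨idx_mem S u hu σ, fun j hj hjS => absurd (idx_le S u hu σ hjS) (not_le.mpr hj)⟩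

lemma idx_ne_iff (u v : V) (hu : ∃ t, u ∈ S t) (hv : ∃ t, v ∈ S t) (σ : Equiv.Perm (Fin N))
    (hR : (Finset.univ.filter fun t : Fin N => u ∈ S t ∨ v ∈ S t).Nonempty) :
    idx S u hu σ ≠ idx S v hv σ ↔
      firstIn (Finset.univ.filter fun t : Fin N => u ∈ S t ∨ v ∈ S t) hR σ ∈
        (Finset.univ.filter fun t : Fin N => (u ∈ S t ∧ v ∉ S t) ∨ (v ∈ S t ∧ u ∉ S t)) := by
  have hfilt : (Finset.univ.filter fun i : Fin N =>
      σ i ∈ (Finset.univ.filter fun t : Fin N => u ∈ S t ∨ v ∈ S t))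
      = (Finset.univ.filter fun i : Fin N => u ∈ S (σ i) ∨ v ∈ S (σ i)) := by
    apply Finset.filter_congr; intro i _; simp
  have hTne : (Finset.univ.filter fun i : Fin N => u ∈ S (σ i) ∨ v ∈ S (σ i)).Nonempty := by
    obtain ⟨t, ht⟩ := hu; exact ⟨σ⁻¹ t, by simp [ht]⟩
  set m := (Finset.univ.filter fun i : Fin N => u ∈ S (σ i) ∨ v ∈ S (σ i)).min' hTne with hm
  have hwin : firstIn (Finset.univ.filter fun t : Fin N => u ∈ S t ∨ v ∈ S t) hR σ = σ m := by
    unfold firstIn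
    rw [min'_congr' hfilt]
  have hmmem : u ∈ S (σ m) ∨ v ∈ S (σ m) :=
    (Finset.mem_filter.mp (Finset.min'_mem _ hTne)).2
  have hmu : u ∈ S (σ m) → idx S u hu σ = m := by
    intro h
    refine le_antisymm (idx_le S u hu σ h) ?_
    rw [hm]
    apply Finset.min'_le
    exact Finset.mem_filter.mpr ⟨Finset.mem_univ _, Or.inl (idx_mem S u hu σ)⟩
  have hmv : v ∈ S (σ m) → idx S v hv σ = m := by
    intro h
    refine le_antisymm (idx_le S v hv σ h) ?_
    rw [hm]
    apply Finset.min'_le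
    exact Finset.mem_filter.mpr ⟨Finset.mem_univ _, Or.inr (idx_mem S v hv σ)⟩
  have hnu : u ∉ S (σ m) → idx S u hu σ ≠ m := by
    intro h heq; exact h (heq ▸ idx_mem S u hu σ)
  have hnv : v ∉ S (σ m) → idx S v hv σ ≠ m := by
    intro h heq; exact h (heq ▸ idx_mem S v hv σ)
  rw [hwin]
  simp only [Finset.mem_filter, Finset.mem_univ, true_and]
  by_cases hu' : u ∈ S (σ m) <;> by_cases hv' : v ∈ S (σ m)
  · rw [hmu hu', hmv hv']
    exact iff_of_false (by simp) (by simp [hu', hv'])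
  · rw [hmu hu']
    exact iff_of_true (Ne.symm (hnv hv')) (Or.inl ⟨hu', hv'⟩)
  · rw [hmv hv']
    exact iff_of_true (hnu hu') (Or.inr ⟨hv', hu'⟩)
  · exact absurd hmmem (by simp [hu', hv'])

lemma pair_count (u v : V) (hu : ∃ t, u ∈ S t) (hv : ∃ t, v ∈ S t) :
    (Finset.univ.filter fun σ : Equiv.Perm (Fin N) => idx S u hu σ ≠ idx S v hv σ).card
      * (Finset.univ.filter fun t : Fin N => u ∈ S t ∨ v ∈ S t).card
    = (Finset.univ.filter fun t : Fin N =>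
        (u ∈ S t ∧ v ∉ S t) ∨ (v ∈ S t ∧ u ∉ S t)).card * N.factorial := by
  have hR : (Finset.univ.filter fun t : Fin N => u ∈ S t ∨ v ∈ S t).Nonempty := by
    obtain ⟨t, ht⟩ := hu; exact ⟨t, by simp [ht]⟩
  have hD : (Finset.univ.filter fun t : Fin N => (u ∈ S t ∧ v ∉ S t) ∨ (v ∈ S t ∧ u ∉ S t))
      ⊆ (Finset.univ.filter fun t : Fin N => u ∈ S t ∨ v ∈ S t) := by
    intro t ht
    simp only [Finset.mem_filter, Finset.mem_univ, true_and] at ht ⊢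
    rcases ht with ⟨h, -⟩ | ⟨h, -⟩
    · exact Or.inl h
    · exact Or.inr h
  have hcong : (Finset.univ.filter fun σ : Equiv.Perm (Fin N) => idx S u hu σ ≠ idx S v hv σ)
      = (Finset.univ.filter fun σ : Equiv.Perm (Fin N) =>
          firstIn _ hR σ ∈ (Finset.univ.filter fun t : Fin N =>
            (u ∈ S t ∧ v ∉ S t) ∨ (v ∈ S t ∧ u ∉ S t))) := by
    apply Finset.filter_congr; intro σ _
    exact idx_ne_iff S u v hu hv σ hR
  rw [hcong]
  exact count_firstIn_mem _ _ hR hD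

end PairCount

section Main

lemma sum_ite_idx {V : Type} [Fintype V] [DecidableEq V] {N : ℕ} (S : Fin N → Finset V)
    (w : V → V → ℝ) (u v : V) (hu : ∃ t, u ∈ S t) (hv : ∃ t, v ∈ S t)
    (σ : Equiv.Perm (Fin N)) :
    (∑ i : Fin N, if u ∈ (S (σ i)) \ ((Finset.univ.filter fun j : Fin N => j < i).biUnion
          fun j => S (σ j)) ∧
        v ∉ (S (σ i)) \ ((Finset.univ.filter fun j : Fin N => j < i).biUnion
          fun j => S (σ j)) then w u v else 0)
      = if idx S u hu σ = idx S v hv σ then 0 else w u v := by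
  have hcond : ∀ i : Fin N,
      (u ∈ (S (σ i)) \ ((Finset.univ.filter fun j : Fin N => j < i).biUnion
          fun j => S (σ j)) ∧
        v ∉ (S (σ i)) \ ((Finset.univ.filter fun j : Fin N => j < i).biUnion
          fun j => S (σ j)))
      ↔ (i = idx S u hu σ ∧ ¬ (i = idx S v hv σ)) := by
    intro i
    rw [mem_part_iff_idx S u hu σ i, mem_part_iff_idx S v hv σ i]
  by_cases hab : idx S u hu σ = idx S v hv σ
  · rw [if_pos hab]
    apply Finset.sum_eq_zero
    intro i _
    rw [if_neg]
    rw [hcond i]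
    rintro ⟨h1, h2⟩
    exact h2 (h1.trans hab)
  · rw [if_neg hab]
    have hterm : ∀ i ∈ (Finset.univ : Finset (Fin N)),
        (if u ∈ (S (σ i)) \ ((Finset.univ.filter fun j : Fin N => j < i).biUnion
              fun j => S (σ j)) ∧
            v ∉ (S (σ i)) \ ((Finset.univ.filter fun j : Fin N => j < i).biUnion
              fun j => S (σ j)) then w u v else 0)
          = (if i = idx S u hu σ then w u v else 0) := by
      intro i _
      by_cases hi : i = idx S u hu σ
      · rw [if_pos hi, if_pos]
        rw [hcond i]
        exact ⟨hi, fun h2 => hab (hi.symm.trans h2)⟩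
      · rw [if_neg hi, if_neg]
        rw [hcond i]
        exact fun h => hi h.1
    rw [Finset.sum_congr rfl hterm]
    simp

end Main

/-- Step 1 of the aggregation procedure: processing the cover sets in a uniformly random
order and setting `P_i = S_{σ(i)} ∖ (S_{σ(1)} ∪ ⋯ ∪ S_{σ(i−1)})`, the expected total cut
weight of the parts is at most `2·k·n·B/c`. -/
theorem random_order_expectation_bound
    (V : Type) [Fintype V] [DecidableEq V] (w : V → V → ℝ)
    (hw : ∀ u v, w u v = w v u) (hw0 : ∀ u v, 0 ≤ w u v)
    (k c B : ℝ) (hk : 1 ≤ k) (hc0 : 0 < c) (hc1 : c ≤ 1) (hB : 0 ≤ B)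
    (N : ℕ) (S : Fin N → Finset V)
    (hcover : ∀ v : V, ∃ t, v ∈ S t)
    (hcut : ∀ t, cutw w (S t) ≤ B)
    (hfrac : ∀ v : V, (c / ((Fintype.card V : ℝ) * k)) * N ≤
      ((Finset.univ.filter fun t : Fin N => v ∈ S t).card : ℝ)) :
    (∑ σ : Equiv.Perm (Fin N), ∑ i : Fin N,
        cutw w ((S (σ i)) \
          ((Finset.univ.filter fun j : Fin N => j < i).biUnion fun j => S (σ j))))
      / (Nat.factorial N : ℝ) ≤ 2 * k * (Fintype.card V : ℝ) * B / c := by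
  have hk0 : (0:ℝ) ≤ k := zero_le_one.trans hk
  by_cases hV : IsEmpty V
  · have hz : ∀ F : Finset V, cutw w F = 0 := by
      intro F; simp [cutw, Finset.univ_eq_empty]
    simp only [hz, Finset.sum_const_zero, zero_div]
    apply div_nonneg _ hc0.le
    exact mul_nonneg (mul_nonneg (mul_nonneg (by norm_num) hk0) (Nat.cast_nonneg _)) hB
  have hV' : Nonempty V := not_isEmpty_iff.mp hV
  obtain ⟨v0⟩ := hV'
  have hN : 0 < N := (hcover v0).choose.pos
  have hn1 : (1:ℝ) ≤ (Fintype.card V : ℝ) := by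
    have : Nonempty V := ⟨v0⟩
    exact_mod_cast Fintype.card_pos
  set n : ℝ := (Fintype.card V : ℝ) with hndef
  have hfacpos : (0:ℝ) < (N.factorial : ℝ) := by exact_mod_cast N.factorial_pos
  -- Step 1 : rewrite the numerator
  have hnum : (∑ σ : Equiv.Perm (Fin N), ∑ i : Fin N,
        cutw w ((S (σ i)) \
          ((Finset.univ.filter fun j : Fin N => j < i).biUnion fun j => S (σ j))))
      = ∑ u : V, ∑ v : V,
          ((Finset.univ.filter fun σ : Equiv.Perm (Fin N) =>
            idx S u (hcover u) σ ≠ idx S v (hcover v) σ).card : ℝ) * w u v := by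
    have h1 : ∀ σ : Equiv.Perm (Fin N), (∑ i : Fin N,
        cutw w ((S (σ i)) \
          ((Finset.univ.filter fun j : Fin N => j < i).biUnion fun j => S (σ j))))
        = ∑ u : V, ∑ v : V,
            (if idx S u (hcover u) σ = idx S v (hcover v) σ then 0 else w u v) := by
      intro σ
      simp only [cutw]
      rw [Finset.sum_comm]
      refine Finset.sum_congr rfl fun u _ => ?_
      rw [Finset.sum_comm]
      refine Finset.sum_congr rfl fun v _ => ?_
      convert sum_ite_idx S w u v (hcover u) (hcover v) σ using 2
      split_ifs <;> rfl
    rw [Finset.sum_congr rfl fun σ _ => h1 σ]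
    rw [Finset.sum_comm]
    refine Finset.sum_congr rfl fun u _ => ?_
    rw [Finset.sum_comm]
    refine Finset.sum_congr rfl fun v _ => ?_
    rw [Finset.sum_ite, Finset.sum_const, Finset.sum_const]
    simp [nsmul_eq_mul]
  -- abbreviations
  set q : ℝ := c / (n * k) * N with hqdef
  have hnk : (0:ℝ) < n * k :=
    mul_pos (lt_of_lt_of_le one_pos hn1) (lt_of_lt_of_le one_pos hk)
  have hq : 0 < q := by
    apply mul_pos (div_pos hc0 hnk)
    exact_mod_cast hN
  -- per-pair bound on the permutation count
  have hcnt : ∀ u v : V,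
      ((Finset.univ.filter fun σ : Equiv.Perm (Fin N) =>
          idx S u (hcover u) σ ≠ idx S v (hcover v) σ).card : ℝ)
        ≤ ((Finset.univ.filter fun t : Fin N =>
            (u ∈ S t ∧ v ∉ S t) ∨ (v ∈ S t ∧ u ∉ S t)).card : ℝ)
            * (N.factorial : ℝ) / q := by
    intro u v
    rw [le_div_iff₀ hq]
    have hpc : ((Finset.univ.filter fun σ : Equiv.Perm (Fin N) =>
          idx S u (hcover u) σ ≠ idx S v (hcover v) σ).card : ℝ)
          * ((Finset.univ.filter fun t : Fin N => u ∈ S t ∨ v ∈ S t).card : ℝ)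
        = ((Finset.univ.filter fun t : Fin N =>
            (u ∈ S t ∧ v ∉ S t) ∨ (v ∈ S t ∧ u ∉ S t)).card : ℝ) * (N.factorial : ℝ) := by
      exact_mod_cast pair_count S u v (hcover u) (hcover v)
    have hqR : q ≤ ((Finset.univ.filter fun t : Fin N => u ∈ S t ∨ v ∈ S t).card : ℝ) := by
      refine le_trans (hfrac u) ?_
      have : (Finset.univ.filter fun t : Fin N => u ∈ S t)
          ⊆ (Finset.univ.filter fun t : Fin N => u ∈ S t ∨ v ∈ S t) := by
        intro t ht
        simp only [Finset.mem_filter] at ht ⊢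
        exact ⟨ht.1, Or.inl ht.2⟩
      exact_mod_cast Finset.card_le_card this
    calc ((Finset.univ.filter fun σ : Equiv.Perm (Fin N) =>
          idx S u (hcover u) σ ≠ idx S v (hcover v) σ).card : ℝ) * q
        ≤ ((Finset.univ.filter fun σ : Equiv.Perm (Fin N) =>
          idx S u (hcover u) σ ≠ idx S v (hcover v) σ).card : ℝ)
          * ((Finset.univ.filter fun t : Fin N => u ∈ S t ∨ v ∈ S t).card : ℝ) :=
          mul_le_mul_of_nonneg_left hqR (Nat.cast_nonneg _)
      _ = _ := hpc
  -- the cut-weight double sum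
  have hcw1 : (∑ u : V, ∑ v : V,
      ((Finset.univ.filter fun t : Fin N => u ∈ S t ∧ v ∉ S t).card : ℝ) * w u v)
      = ∑ t : Fin N, cutw w (S t) := by
    have hterm : ∀ u v : V,
        ((Finset.univ.filter fun t : Fin N => u ∈ S t ∧ v ∉ S t).card : ℝ) * w u v
        = ∑ t : Fin N, (if u ∈ S t ∧ v ∉ S t then w u v else 0) := by
      intro u v
      rw [Finset.card_filter]
      push_cast
      rw [Finset.sum_mul]
      refine Finset.sum_congr rfl fun t _ => ?_
      rw [ite_mul, one_mul, zero_mul]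
    simp only [hterm]
    calc (∑ u : V, ∑ v : V, ∑ t : Fin N, (if u ∈ S t ∧ v ∉ S t then w u v else 0))
        = ∑ u : V, ∑ t : Fin N, ∑ v : V, (if u ∈ S t ∧ v ∉ S t then w u v else 0) :=
          Finset.sum_congr rfl fun u _ => Finset.sum_comm
      _ = ∑ t : Fin N, ∑ u : V, ∑ v : V, (if u ∈ S t ∧ v ∉ S t then w u v else 0) :=
          Finset.sum_comm
      _ = ∑ t : Fin N, cutw w (S t) := by
          refine Finset.sum_congr rfl fun t _ => ?_
          simp only [cutw]
          refine Finset.sum_congr rfl fun a _ => Finset.sum_congr rfl fun b _ => ?_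
          by_cases h : a ∈ S t ∧ b ∉ S t
          · rw [if_pos h, if_pos h]
          · rw [if_neg h, if_neg h]
  have hcw2 : (∑ u : V, ∑ v : V,
      ((Finset.univ.filter fun t : Fin N => v ∈ S t ∧ u ∉ S t).card : ℝ) * w u v)
      = ∑ t : Fin N, cutw w (S t) := by
    have hterm : ∀ u v : V,
        ((Finset.univ.filter fun t : Fin N => v ∈ S t ∧ u ∉ S t).card : ℝ) * w u v
        = ∑ t : Fin N, (if v ∈ S t ∧ u ∉ S t then w u v else 0) := by
      intro u v
      rw [Finset.card_filter]
      push_cast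
      rw [Finset.sum_mul]
      refine Finset.sum_congr rfl fun t _ => ?_
      rw [ite_mul, one_mul, zero_mul]
    simp only [hterm]
    calc (∑ u : V, ∑ v : V, ∑ t : Fin N, (if v ∈ S t ∧ u ∉ S t then w u v else 0))
        = ∑ u : V, ∑ t : Fin N, ∑ v : V, (if v ∈ S t ∧ u ∉ S t then w u v else 0) :=
          Finset.sum_congr rfl fun u _ => Finset.sum_comm
      _ = ∑ t : Fin N, ∑ u : V, ∑ v : V, (if v ∈ S t ∧ u ∉ S t then w u v else 0) :=
          Finset.sum_comm
      _ = ∑ t : Fin N, ∑ a : V, ∑ b : V, (if a ∈ S t ∧ b ∉ S t then w a b else 0) := by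
          refine Finset.sum_congr rfl fun t _ => ?_
          rw [Finset.sum_comm]
          refine Finset.sum_congr rfl fun a _ => Finset.sum_congr rfl fun b _ => ?_
          by_cases h : a ∈ S t ∧ b ∉ S t
      
          · rw [if_pos h, if_pos h, hw b a]
          · rw [if_neg h, if_neg h]
      _ = ∑ t : Fin N, cutw w (S t) := by
          refine Finset.sum_congr rfl fun t _ => ?_
          simp only [cutw]
          refine Finset.sum_congr rfl fun a _ => Finset.sum_congr rfl fun b _ => ?_
          by_cases h : a ∈ S t ∧ b ∉ S t
          · rw [if_pos h, if_pos h]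
          · rw [if_neg h, if_neg h]
  -- splitting the symmetric difference count
  have hDsplit : ∀ u v : V,
      ((Finset.univ.filter fun t : Fin N =>
        (u ∈ S t ∧ v ∉ S t) ∨ (v ∈ S t ∧ u ∉ S t)).card : ℝ)
      = ((Finset.univ.filter fun t : Fin N => u ∈ S t ∧ v ∉ S t).card : ℝ)
        + ((Finset.univ.filter fun t : Fin N => v ∈ S t ∧ u ∉ S t).card : ℝ) := by
    intro u v
    rw [Finset.filter_or]
    rw [Finset.card_union_of_disjoint]
    · push_cast; ring
    · rw [Finset.disjoint_left]
      intro t ht ht'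
      simp only [Finset.mem_filter] at ht ht'
      exact ht.2.2 ht'.2.1
  have hcutsum : (∑ t : Fin N, cutw w (S t)) ≤ N * B := by
    calc (∑ t : Fin N, cutw w (S t)) ≤ ∑ _t : Fin N, B :=
        Finset.sum_le_sum fun t _ => hcut t
      _ = N * B := by rw [Finset.sum_const, Finset.card_univ, Fintype.card_fin,
          nsmul_eq_mul]
  -- assemble
  rw [hnum, div_le_iff₀ hfacpos]
  have hD2 : (∑ u : V, ∑ v : V,
      ((Finset.univ.filter fun t : Fin N =>
        (u ∈ S t ∧ v ∉ S t) ∨ (v ∈ S t ∧ u ∉ S t)).card : ℝ) * w u v)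
      ≤ 2 * N * B := by
    calc (∑ u : V, ∑ v : V,
        ((Finset.univ.filter fun t : Fin N =>
          (u ∈ S t ∧ v ∉ S t) ∨ (v ∈ S t ∧ u ∉ S t)).card : ℝ) * w u v)
        = (∑ u : V, ∑ v : V,
          ((Finset.univ.filter fun t : Fin N => u ∈ S t ∧ v ∉ S t).card : ℝ) * w u v)
          + (∑ u : V, ∑ v : V,
          ((Finset.univ.filter fun t : Fin N => v ∈ S t ∧ u ∉ S t).card : ℝ) * w u v) := by
          rw [← Finset.sum_add_distrib]
          refine Finset.sum_congr rfl fun u _ => ?_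
          rw [← Finset.sum_add_distrib]
          refine Finset.sum_congr rfl fun v _ => ?_
          rw [hDsplit u v, add_mul]
      _ = 2 * ∑ t : Fin N, cutw w (S t) := by rw [hcw1, hcw2]; ring
      _ ≤ 2 * (N * B) := by
          have := hcutsum
          nlinarith [hcutsum]
      _ = 2 * N * B := by ring
  calc (∑ u : V, ∑ v : V,
      ((Finset.univ.filter fun σ : Equiv.Perm (Fin N) =>
        idx S u (hcover u) σ ≠ idx S v (hcover v) σ).card : ℝ) * w u v)
      ≤ ∑ u : V, ∑ v : V,
        (((Finset.univ.filter fun t : Fin N =>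
          (u ∈ S t ∧ v ∉ S t) ∨ (v ∈ S t ∧ u ∉ S t)).card : ℝ) * (N.factorial : ℝ) / q)
          * w u v := by
        refine Finset.sum_le_sum fun u _ => Finset.sum_le_sum fun v _ => ?_
        exact mul_le_mul_of_nonneg_right (hcnt u v) (hw0 u v)
    _ = ((N.factorial : ℝ) / q) * ∑ u : V, ∑ v : V,
        ((Finset.univ.filter fun t : Fin N =>
          (u ∈ S t ∧ v ∉ S t) ∨ (v ∈ S t ∧ u ∉ S t)).card : ℝ) * w u v := by
        rw [Finset.mul_sum]
        refine Finset.sum_congr rfl fun u _ => ?_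
        rw [Finset.mul_sum]
        refine Finset.sum_congr rfl fun v _ => ?_
        ring
    _ ≤ ((N.factorial : ℝ) / q) * (2 * N * B) := by
        apply mul_le_mul_of_nonneg_left hD2
        exact div_nonneg hfacpos.le hq.le
    _ = 2 * k * n * B / c * (N.factorial : ℝ) := by
        rw [hqdef]
        have hc' : c ≠ 0 := hc0.ne'
        have hn' : n ≠ 0 := (lt_of_lt_of_le one_pos hn1).ne'
        have hk' : k ≠ 0 := (lt_of_lt_of_le one_pos hk).ne'
        have hN' : (N:ℝ) ≠ 0 := Nat.cast_ne_zero.mpr hN.ne'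
        field_simp
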